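/- Any (n,k)-separating system with k < n/2 has size at least (n/k)·log_{ne/k} n. -/

import Mathlib

/-- Any `(n,k)`-separating system with `k < n/2` has size at least
`(n/k) · log_{ne/k} n`. -/
theorem stmt8 (n k : ℕ) (hk : 0 < k) (hkn : 2 * k < n)
    (S : Finset (Finset (Fin n)))
    (hsize : ∀ s ∈ S, s.card ≤ k)
    (hsep : ∀ i j : Fin n, i ≠ j → ∃ s ∈ S, (i ∈ s ∧ j ∉ s) ∨ (j ∈ s ∧ i ∉ s)) :
    ((n : ℝ) / k) * (Real.log n / Real.log ((n : ℝ) * Real.exp 1 / k)) ≤ S.card := by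
  classical
  set m := S.card with hm
  set T : Fin n → Finset (Finset (Fin n)) := fun i => S.filter (fun s => i ∈ s) with hT
  have hTinj : Function.Injective T := by
    intro i j hij
    by_contra hne
    obtain ⟨s, hsS, hs⟩ := hsep i j hne
    rcases hs with ⟨h1, h2⟩ | ⟨h1, h2⟩
    · have : s ∈ T i := by simp [hT, hsS, h1]
      rw [hij] at this
      simp [hT] at this
      exact h2 this.2
    · have : s ∈ T j := by simp [hT, hsS, h1]
      rw [← hij] at this
      simp [hT] at this
      exact h2 this.2
  have hsum : ∑ i : Fin n, (T i).card ≤ m * k := by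
    have h1 : ∑ i : Fin n, (T i).card = ∑ s ∈ S, s.card := by
      simp only [hT, Finset.card_filter]
      rw [Finset.sum_comm]
      refine Finset.sum_congr rfl fun s _ => ?_
      rw [Finset.sum_ite_mem]
      simp
    rw [h1]
    calc ∑ s ∈ S, s.card ≤ ∑ s ∈ S, k := Finset.sum_le_sum hsize
    _ = m * k := by simp [hm, mul_comm]
  set c : Fin n → ℕ := fun i => (T i).card with hc
  have hn0 : (0:ℝ) < n := by
    have : 0 < n := by omega
    exact_mod_cast this
  have hk0 : (0:ℝ) < k := by exact_mod_cast hk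
  set x : ℝ := (k:ℝ)/n with hxdef
  have hx0 : 0 < x := by positivity
  have hx1 : x < 1 := by
    rw [hxdef, div_lt_one hn0]
    exact_mod_cast by omega
  -- sum over distinct signatures is at most sum over the powerset
  have hpow : ((x:ℝ)+1)^m = ∑ t ∈ S.powerset, x ^ t.card := by
    rw [hm, ← Finset.prod_const, Finset.prod_add]
    simp
  have himg : ∑ i : Fin n, x ^ c i ≤ ∑ t ∈ S.powerset, x ^ t.card := by
    have h2 : ∑ i : Fin n, x ^ c i = ∑ t ∈ Finset.univ.image T, x ^ t.card := by
      rw [Finset.sum_image (fun i _ j _ h => hTinj h)]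
    rw [h2]
    apply Finset.sum_le_sum_of_subset_of_nonneg
    · intro t ht
      obtain ⟨i, _, rfl⟩ := Finset.mem_image.1 ht
      exact Finset.mem_powerset.2 (Finset.filter_subset _ _)
    · intro t _ _
      positivity
  have hle : ∑ i : Fin n, x ^ c i ≤ (x + 1) ^ m := by
    rw [← hpow] at himg
    exact himg
  -- analytic part
  have hlogx : Real.log x < 0 := Real.log_neg hx0 hx1
  set A : ℝ := (m*k : ℝ)/n * Real.log x with hA
  have amgm : (n:ℝ) * Real.exp A ≤ ∑ i : Fin n, x ^ c i := by
    have h1 : ∏ i : Fin n, (x ^ c i) ^ ((1:ℝ)/n) ≤ ∑ i : Fin n, ((1:ℝ)/n) * x ^ c i := by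
      refine Real.geom_mean_le_arith_mean_weighted _ _ _ (fun i _ => by positivity) ?_
        (fun i _ => by positivity)
      simp
      field_simp
    have h2 : ∏ i : Fin n, (x ^ c i) ^ ((1:ℝ)/n)
        = Real.exp ((∑ i : Fin n, (c i : ℝ)) * Real.log x / n) := by
      have : ∀ i : Fin n, (x ^ c i) ^ ((1:ℝ)/n) = Real.exp ((c i : ℝ) * Real.log x / n) := by
        intro i
        rw [Real.rpow_def_of_pos (by positivity), Real.log_pow]
        ring_nf
      rw [Finset.prod_congr rfl (fun i _ => this i), ← Real.exp_sum]
      congr 1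
      rw [Finset.sum_mul, Finset.sum_div]
    have h3 : Real.exp A ≤ Real.exp ((∑ i : Fin n, (c i : ℝ)) * Real.log x / n) := by
      apply Real.exp_le_exp.2
      have hcs : (∑ i : Fin n, (c i:ℝ)) ≤ (m:ℝ)*k := by
        exact_mod_cast hsum
      rw [hA, div_mul_eq_mul_div]
      exact (div_le_div_iff_of_pos_right hn0).2 (mul_le_mul_of_nonpos_right hcs hlogx.le)
    have h4 : (n:ℝ) * Real.exp A ≤ (n:ℝ) * ∑ i : Fin n, ((1:ℝ)/n) * x ^ c i := by
      have := h3.trans (h2 ▸ h1)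
      nlinarith [this]
    calc (n:ℝ) * Real.exp A ≤ (n:ℝ) * ∑ i : Fin n, ((1:ℝ)/n) * x ^ c i := h4
      _ = ∑ i : Fin n, x ^ c i := by
          rw [Finset.mul_sum]
          refine Finset.sum_congr rfl fun i _ => ?_
          field_simp
  -- take logs
  have hchain : (n:ℝ) * Real.exp A ≤ (x+1)^m := amgm.trans hle
  have hlog : Real.log ((n:ℝ) * Real.exp A) ≤ Real.log ((x+1)^m) :=
    Real.log_le_log (by positivity) hchain
  rw [Real.log_mul (by positivity) (Real.exp_ne_zero _), Real.log_exp, Real.log_pow] at hlog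
  have hlog1x : Real.log (x+1) ≤ x := by
    have := Real.log_le_sub_one_of_pos (show (0:ℝ) < x+1 by positivity)
    linarith
  have hmx : (m:ℝ) * Real.log (x+1) ≤ (m:ℝ) * x := by
    have : (0:ℝ) ≤ m := by positivity
    nlinarith
  set L : ℝ := Real.log ((n : ℝ) * Real.exp 1 / k) with hLdef
  have hLx : L = 1 - Real.log x := by
    rw [hLdef, hxdef, Real.log_div (by positivity) (by positivity),
      Real.log_mul (by positivity) (Real.exp_ne_zero _), Real.log_exp,
      Real.log_div (by positivity) (by positivity)]
    ring
  have hL : 0 < L := by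
    apply Real.log_pos
    rw [lt_div_iff₀ hk0]
    have he : (2:ℝ) ≤ Real.exp 1 := by
      have := Real.add_one_le_exp (1:ℝ)
      linarith
    have hnk : (k:ℝ) < n := by exact_mod_cast by omega
    nlinarith
  have key : Real.log n ≤ (m:ℝ) * ((k:ℝ)/n) * L := by
    have h5 : Real.log n + A ≤ (m:ℝ) * x := le_trans hlog hmx
    rw [hLx]
    rw [hA, hxdef] at *
    have heq : (m:ℝ) * ((k:ℝ)/n) * (1 - Real.log ((k:ℝ)/n))
        = (m:ℝ)*((k:ℝ)/n) - (m:ℝ)*(k:ℝ)/n*Real.log ((k:ℝ)/n) := by ring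
    linarith
  calc ((n:ℝ)/k) * (Real.log n / L) ≤ ((n:ℝ)/k) * (((m:ℝ) * ((k:ℝ)/n) * L) / L) := by
        gcongr
    _ = m := by
        field_simp
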